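/- For every q ≥ 0 and each j ∈ {1,2}, the value L_{ξ,j}(q) equals L_x(q) for at least one point x belonging to the family consisting of the points x_n = (Q_n, P_n) with −1 ≤ n < s together with the points x_{n,t} = (Q_{n,t}, P_{n,t}) with 1 ≤ n < s and 0 < t < a_n. In other words, the combined graph of (L_{ξ,1}, L_{ξ,2}) is covered by the trajectories of these points. -/

import Mathlib

open Pointwise

/-- sign (-1)^n for integer n -/
def sg (n : ℤ) : ℤ := if Even n then 1 else -1

lemma sg_mul_self (n : ℤ) : sg n * sg n = 1 := by
  unfold sg; split <;> norm_num

lemma sg_succ (n : ℤ) : sg (n + 1) = - sg n := by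
  unfold sg
  rcases Int.even_or_odd n with h | h
  · rw [if_pos h, if_neg (Int.not_even_iff_odd.mpr h.add_one)]
  · rw [if_neg (Int.not_even_iff_odd.mpr h), if_pos h.add_one]; norm_num

lemma sg_cases (n : ℤ) : sg n = 1 ∨ sg n = -1 := by unfold sg; split <;> simp

lemma sg_sub_one (n : ℤ) : sg (n - 1) = - sg n := by
  have := sg_succ (n-1); simp at this; omega

lemma sg_add_two (n : ℤ) : sg (n + 2) = sg n := by
  rw [show n + 2 = n + 1 + 1 by ring, sg_succ, sg_succ]; ring


open Pointwise

/-- Distance from a real number to the nearest integer. -/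
noncomputable def nearestInt (ξ : ℝ) : ℝ := sInf (Set.range fun m : ℤ => |ξ - (m : ℝ)|)

/-- The convex body `C_ξ(e^q) = {(x,y) : |x| ≤ e^q, |xξ - y| ≤ e^{-q}}`. -/
def body (ξ q : ℝ) : Set (ℝ × ℝ) :=
  {p : ℝ × ℝ | |p.1| ≤ Real.exp q ∧ |p.1 * ξ - p.2| ≤ Real.exp (-q)}

/-- The `j`-th successive minimum of `C_ξ(e^q)` with respect to the lattice `ℤ²`:
the smallest `λ ≥ 0` such that `λ • C_ξ(e^q)` contains at least `j` linearly
independent points of `ℤ²`. -/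
noncomputable def lam (ξ q : ℝ) (j : ℕ) : ℝ :=
  sInf {l : ℝ | 0 ≤ l ∧ ∃ v : Fin j → ℤ × ℤ,
    LinearIndependent ℝ (fun i => ((((v i).1 : ℝ)), (((v i).2 : ℝ)))) ∧
    ∀ i, ((((v i).1 : ℝ)), (((v i).2 : ℝ))) ∈ l • body ξ q}

/-- `L_{ξ,j}(q) = log λ_j(C_ξ(e^q))`. -/
noncomputable def LL (ξ : ℝ) (j : ℕ) (q : ℝ) : ℝ := Real.log (lam ξ q j)

/-- `L_x(q)`: the logarithm of the smallest `λ ≥ 0` with `x ∈ λ • C_ξ(e^q)`, namely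
`log (max (|Q| e^{-q}) (|Qξ - P| e^q))`, which equals
`max (log |Q| - q) (log |Qξ - P| + q)` (the first term being omitted when `Q = 0`,
the second when `Qξ - P = 0`). -/
noncomputable def Lx (ξ : ℝ) (x : ℤ × ℤ) (q : ℝ) : ℝ :=
  Real.log (max (|(x.1 : ℝ)| * Real.exp (-q)) (|(x.1 : ℝ) * ξ - (x.2 : ℝ)| * Real.exp q))

/-- Data of a real number `ξ ∈ [0,1/2]` together with its simple continued fraction
expansion `ξ = [0; a 1, a 2, …]`, with partial quotients `a n ≥ 1` for `1 ≤ n < s`,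
where `s ∈ ℕ* ∪ {∞}` (encoded in `WithTop ℤ`), `a (s-1) ≥ 2` if `2 ≤ s < ∞`
(`s = 1` meaning `ξ = 0`), and with `Q`, `P` the denominators and numerators of its
convergents, given by the standard recurrences with initial values
`P (-1) = Q 0 = 1`, `P 0 = Q (-1) = 0`.  The fact that `[0; a 1, a 2, …]` is indeed
the continued fraction expansion of `ξ` is recorded through the value conditions
`hfin` (if `s < ∞` then `ξ = P (s-1) / Q (s-1)`) and `hinf` (if `s = ∞` then
`P n / Q n → ξ`), which, given the constraints on the `a n`, characterize it. -/
structure CFData where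
  ξ : ℝ
  s : WithTop ℤ
  a : ℤ → ℤ
  Q : ℤ → ℤ
  P : ℤ → ℤ
  hξ0 : 0 ≤ ξ
  hξhalf : ξ ≤ 1 / 2
  hs : 1 ≤ s
  ha : ∀ n : ℤ, 1 ≤ n → (n : WithTop ℤ) < s → 1 ≤ a n
  halast : ∀ n : ℤ, 2 ≤ n → (n : WithTop ℤ) = s → 2 ≤ a (n - 1)
  hQ0 : Q 0 = 1
  hQneg : Q (-1) = 0
  hP0 : P 0 = 0
  hPneg : P (-1) = 1
  hQrec : ∀ n : ℤ, 1 ≤ n → (n : WithTop ℤ) < s → Q n = Q (n - 2) + a n * Q (n - 1)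
  hPrec : ∀ n : ℤ, 1 ≤ n → (n : WithTop ℤ) < s → P n = P (n - 2) + a n * P (n - 1)
  hfin : ∀ k : ℤ, (k : WithTop ℤ) = s → ξ = (P (k - 1) : ℝ) / (Q (k - 1) : ℝ)
  hinf : s = ⊤ → Filter.Tendsto (fun n : ℕ => (P (n : ℤ) : ℝ) / (Q (n : ℤ) : ℝ))
      Filter.atTop (nhds ξ)

namespace CFData

/-- `Δ n = |Q n • ξ - P n|`. -/
noncomputable def Δ (c : CFData) (n : ℤ) : ℝ := |(c.Q n : ℝ) * c.ξ - (c.P n : ℝ)|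

/-- `Q (n,t) = Q (n-2) + t * Q (n-1)`. -/
def Qt (c : CFData) (n t : ℤ) : ℤ := c.Q (n - 2) + t * c.Q (n - 1)

/-- `P (n,t) = P (n-2) + t * P (n-1)`. -/
def Pt (c : CFData) (n t : ℤ) : ℤ := c.P (n - 2) + t * c.P (n - 1)

/-- `Δ (n,t) = |Q (n,t) • ξ - P (n,t)|`. -/
noncomputable def Δt (c : CFData) (n t : ℤ) : ℝ := |(c.Qt n t : ℝ) * c.ξ - (c.Pt n t : ℝ)|

/-- `q n = (log (Q n) - log (Δ (n-1))) / 2`; in particular `q 0 = 0`. -/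
noncomputable def qcrit (c : CFData) (n : ℤ) : ℝ :=
  (Real.log (c.Q n : ℝ) - Real.log (c.Δ (n - 1))) / 2

end CFData


namespace CFData
variable (c : CFData)

lemma coe_lt_s_of_le {n m : ℤ} (h : n ≤ m) (hm : (m : WithTop ℤ) < c.s) :
    (n : WithTop ℤ) < c.s :=
  lt_of_le_of_lt (by exact_mod_cast h) hm

lemma zero_lt_s : ((0 : ℤ) : WithTop ℤ) < c.s := by
  refine lt_of_lt_of_le ?_ c.hs
  exact_mod_cast (by norm_num : ((0:ℤ) : WithTop ℤ) < ((1:ℤ) : WithTop ℤ))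

lemma neg_one_lt_s : ((-1 : ℤ) : WithTop ℤ) < c.s :=
  c.coe_lt_s_of_le (by norm_num) c.zero_lt_s

lemma Qfacts : ∀ n : ℤ, 0 ≤ n → ((n : WithTop ℤ) < c.s →
    1 ≤ c.Q n ∧ 0 ≤ c.Q (n-1) ∧ c.Q (n-1) ≤ c.Q n ∧ n ≤ c.Q n + c.Q (n-1)) := by
  refine fun n hn => Int.le_induction (motive := fun n _ => (n : WithTop ℤ) < c.s →
    1 ≤ c.Q n ∧ 0 ≤ c.Q (n-1) ∧ c.Q (n-1) ≤ c.Q n ∧ n ≤ c.Q n + c.Q (n-1)) ?_ ?_ n hn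
  · intro _; rw [show (0:ℤ)-1 = -1 by ring, c.hQ0, c.hQneg]; norm_num
  · intro n hn ih hs1
    have hns : (n : WithTop ℤ) < c.s := c.coe_lt_s_of_le (by linarith) hs1
    obtain ⟨h1, h2, h3, h4⟩ := ih hns
    have hrec := c.hQrec (n+1) (by linarith) hs1
    rw [show n+1-2 = n-1 by ring, show n+1-1 = n by ring] at hrec
    have ha := c.ha (n+1) (by linarith) hs1
    have hQpos : 1 ≤ c.Q (n+1) := by nlinarith
    simp only [add_sub_cancel_right]
    refine ⟨hQpos, by linarith, by nlinarith, by nlinarith⟩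

lemma Qpos {n : ℤ} (hn : 0 ≤ n) (hns : (n : WithTop ℤ) < c.s) : 1 ≤ c.Q n :=
  (c.Qfacts n hn hns).1

lemma Qmono {n : ℤ} (hn : 0 ≤ n) (hns : (n : WithTop ℤ) < c.s) : c.Q (n-1) ≤ c.Q n :=
  (c.Qfacts n hn hns).2.2.1

lemma Qnonneg {n : ℤ} (hn : -1 ≤ n) (hns : (n : WithTop ℤ) < c.s) : 0 ≤ c.Q n := by
  rcases eq_or_lt_of_le hn with h | h
  · rw [← h, c.hQneg]
  · exact le_trans zero_le_one (c.Qpos (by omega) hns)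

lemma Qgrowth {n : ℤ} (hn : 0 ≤ n) (hns : (n : WithTop ℤ) < c.s) : n ≤ 2 * c.Q n := by
  have h := c.Qfacts n hn hns; omega

/-- determinant identity -/
lemma det : ∀ n : ℤ, 0 ≤ n → ((n : WithTop ℤ) < c.s →
    c.Q n * c.P (n-1) - c.P n * c.Q (n-1) = sg n) := by
  refine fun n hn => Int.le_induction (motive := fun n _ => (n : WithTop ℤ) < c.s →
    c.Q n * c.P (n-1) - c.P n * c.Q (n-1) = sg n) ?_ ?_ n hn
  · intro _
    rw [show (0:ℤ)-1 = -1 by ring, c.hQ0, c.hP0, c.hQneg, c.hPneg]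
    simp [sg]
  · intro n hn ih hs1
    have hns : (n : WithTop ℤ) < c.s := c.coe_lt_s_of_le (by linarith) hs1
    have hd := ih hns
    have hrecQ := c.hQrec (n+1) (by linarith) hs1
    have hrecP := c.hPrec (n+1) (by linarith) hs1
    rw [show n+1-2 = n-1 by ring, show n+1-1 = n by ring] at hrecQ hrecP
    rw [sg_succ]
    simp only [add_sub_cancel_right]
    rw [hrecQ, hrecP]
    linear_combination -hd

end CFData

namespace CFData
variable (c : CFData)

/-- `θ n = Q n * ξ - P n` as a real number. -/
noncomputable def θ (n : ℤ) : ℝ := (c.Q n : ℝ) * c.ξ - (c.P n : ℝ)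

lemma Δ_eq_abs_θ (n : ℤ) : c.Δ n = |c.θ n| := rfl

lemma θ_neg_one : c.θ (-1) = -1 := by
  unfold θ; rw [c.hQneg, c.hPneg]; norm_num

lemma θ_zero : c.θ 0 = c.ξ := by
  unfold θ; rw [c.hQ0, c.hP0]; norm_num

lemma θ_rec {n : ℤ} (hn : 1 ≤ n) (hns : (n : WithTop ℤ) < c.s) :
    c.θ n = c.θ (n-2) + (c.a n : ℝ) * c.θ (n-1) := by
  unfold θ
  rw [c.hQrec n hn hns, c.hPrec n hn hns]
  push_cast; ring

lemma s_pos_k {k : ℤ} (hk : (k : WithTop ℤ) = c.s) : 1 ≤ k := by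
  have := c.hs; rw [← hk] at this
  exact_mod_cast (by exact_mod_cast this : ((1:ℤ) : WithTop ℤ) ≤ (k : ℤ))

lemma θ_last {k : ℤ} (hk : (k : WithTop ℤ) = c.s) : c.θ (k-1) = 0 := by
  have hk1 : 1 ≤ k := c.s_pos_k hk
  have hlt : ((k-1 : ℤ) : WithTop ℤ) < c.s := by
    rw [← hk]; exact_mod_cast (by omega : k - 1 < k)
  have hQ : (1:ℤ) ≤ c.Q (k-1) := c.Qpos (by omega) hlt
  have hξ := c.hfin k hk
  unfold θ
  rw [hξ]
  field_simp
  ring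

/-- If `θ n = 0` then `Q n * θ (n+1) = sg (n+1)`. -/
lemma θ_next_of_zero {n : ℤ} (hn : 0 ≤ n) (hns : ((n+1 : ℤ) : WithTop ℤ) < c.s)
    (h0 : c.θ n = 0) : (c.Q n : ℝ) * c.θ (n+1) = (sg (n+1) : ℝ) := by
  have hd := c.det (n+1) (by omega) hns
  rw [show n+1-1 = n by ring] at hd
  have hQP : (c.Q n : ℝ) * c.ξ = (c.P n : ℝ) := by unfold θ at h0; linarith
  have : (c.Q (n+1) : ℝ) * c.P n - (c.P (n+1) : ℝ) * c.Q n = (sg (n+1) : ℝ) := by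
    exact_mod_cast congrArg (Int.cast : ℤ → ℝ) hd
  unfold θ
  linear_combination this + (c.Q (n+1):ℝ) * hQP

end CFData

namespace CFData
variable (c : CFData)

lemma θ_pre_last {k : ℤ} (hk : (k : WithTop ℤ) = c.s) (h2 : 0 ≤ k - 2) :
    (sg (k-2) : ℝ) * c.θ (k-2) * (c.Q (k-1) : ℝ) = 1 := by
  have hlt : ((k-1 : ℤ) : WithTop ℤ) < c.s := by
    rw [← hk]; exact_mod_cast (by omega : k - 1 < k)
  have hd := c.det (k-1) (by omega) hlt
  rw [show k-1-1 = k-2 by ring] at hd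
  have hd' : (c.Q (k-1) : ℝ) * (c.P (k-2):ℝ) - (c.P (k-1):ℝ) * (c.Q (k-2):ℝ)
      = ((sg (k-1) : ℤ) : ℝ) := by exact_mod_cast congrArg (Int.cast : ℤ → ℝ) hd
  have hsg : ((sg (k-1) : ℤ) : ℝ) = -((sg (k-2) : ℤ):ℝ) := by
    have := sg_succ (k-2); rw [show k-2+1 = k-1 by ring] at this
    exact_mod_cast congrArg (Int.cast : ℤ → ℝ) this
  have hsq : ((sg (k-2) : ℤ):ℝ) * ((sg (k-2) : ℤ):ℝ) = 1 := by
    exact_mod_cast congrArg (Int.cast : ℤ → ℝ) (sg_mul_self (k-2))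
  have hQ1 : (1:ℤ) ≤ c.Q (k-1) := c.Qpos (by omega) hlt
  have hQne : ((c.Q (k-1):ℤ):ℝ) ≠ 0 := by exact_mod_cast (by omega : c.Q (k-1) ≠ 0)
  have hξ := c.hfin k hk
  have hθQ : c.θ (k-2) * (c.Q (k-1):ℝ) = (c.Q (k-2):ℝ)*(c.P (k-1):ℝ) - (c.P (k-2):ℝ)*(c.Q (k-1):ℝ) := by
    unfold θ; rw [hξ]; field_simp
  rw [mul_assoc, hθQ]
  linear_combination -(((sg (k-2):ℤ)):ℝ) * hd' - (((sg (k-2):ℤ)):ℝ) * hsg + hsq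

lemma θ_sign_fin {k : ℤ} (hk : (k : WithTop ℤ) = c.s) :
    ∀ n : ℤ, -1 ≤ n → n ≤ k - 1 → 0 ≤ (sg n : ℝ) * c.θ n := by
  suffices H : ∀ j : ℕ, ∀ n : ℤ, -1 ≤ n → k - 1 - n = j → 0 ≤ (sg n : ℝ) * c.θ n by
    intro n hn hnk
    exact H (k-1-n).toNat n hn (by omega)
  intro j
  induction j using Nat.strong_induction_on with
  | _ j ih =>
    intro n hn hj
    rcases eq_or_lt_of_le hn with h | h
    · rw [← h, c.θ_neg_one]; norm_num [sg]
    have hn0 : 0 ≤ n := by omega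
    rcases eq_or_lt_of_le (show n ≤ k - 1 by omega) with he | hlt1
    · rw [he, c.θ_last hk]; simp
    rcases eq_or_lt_of_le (show n ≤ k - 2 by omega) with he2 | hlt2
    · -- n = k - 2
      have hQpos : (0:ℝ) < (c.Q (k-1) : ℝ) := by
        have hlt : ((k-1 : ℤ) : WithTop ℤ) < c.s := by
          rw [← hk]; exact_mod_cast (by omega : k - 1 < k)
        exact_mod_cast (by linarith [c.Qpos (show (0:ℤ) ≤ k-1 by omega) hlt] : (0:ℤ) < c.Q (k-1))
      have := c.θ_pre_last hk (by omega)
      rw [← he2] at this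
      nlinarith
    · -- n ≤ k - 3
      have hns2 : ((n+2 : ℤ) : WithTop ℤ) < c.s := by
        rw [← hk]; exact_mod_cast (by omega : n + 2 < k)
      have hrec := c.θ_rec (show (1:ℤ) ≤ n+2 by omega) hns2
      rw [show n+2-2 = n by ring, show n+2-1 = n+1 by ring] at hrec
      have ih1 := ih (j-1) (by omega) (n+1) (by omega) (by omega)
      have ih2 := ih (j-2) (by omega) (n+2) (by omega) (by omega)
      have ha : (1:ℤ) ≤ c.a (n+2) := c.ha (n+2) (by omega) hns2
      have ha' : (0:ℝ) ≤ (c.a (n+2) : ℝ) := by exact_mod_cast (by omega : (0:ℤ) ≤ c.a (n+2))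
      have e1 : ((sg (n+2) : ℤ):ℝ) = ((sg n : ℤ):ℝ) := by
        exact_mod_cast congrArg (Int.cast : ℤ → ℝ) (sg_add_two n)
      have e2 : ((sg (n+1) : ℤ):ℝ) = -((sg n : ℤ):ℝ) := by
        exact_mod_cast congrArg (Int.cast : ℤ → ℝ) (sg_succ n)
      have hθn : c.θ n = c.θ (n+2) - (c.a (n+2) : ℝ) * c.θ (n+1) := by linarith
      have key : (sg n : ℝ) * c.θ n
          = ((sg (n+2):ℤ) : ℝ) * c.θ (n+2) + (c.a (n+2):ℝ) * (((sg (n+1):ℤ):ℝ) * c.θ (n+1)) := by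
        rw [hθn, e1, e2]; ring
      rw [key]
      have := mul_nonneg ha' ih1
      linarith

end CFData

namespace CFData
variable (c : CFData)

lemma lt_top_s (hst : c.s = ⊤) (n : ℤ) : (n : WithTop ℤ) < c.s := by
  rw [hst]; exact WithTop.coe_lt_top n

lemma sg_add_two_mul (n : ℤ) : ∀ m : ℕ, sg (n + 2*m) = sg n := by
  intro m
  induction m with
  | zero => norm_num
  | succ m ih =>
    have : n + 2*((m:ℤ)+1) = (n + 2*m) + 2 := by ring
    push_cast
    rw [this, sg_add_two]
    push_cast at ih
    exact ih

lemma θ_sign_inf (hst : c.s = ⊤) : ∀ n : ℤ, -1 ≤ n → 0 ≤ (sg n : ℝ) * c.θ n := by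
  set f : ℤ → ℝ := fun n => (sg n : ℝ) * (c.ξ - (c.P n : ℝ)/(c.Q n : ℝ)) with hf
  have hQR : ∀ n : ℤ, 0 ≤ n → (0:ℝ) < (c.Q n : ℝ) := fun n hn => by
    exact_mod_cast (by linarith [c.Qpos hn (c.lt_top_s hst n)] : (0:ℤ) < c.Q n)
  have hsum : ∀ n : ℤ, 0 ≤ n → f n + f (n+1) = 1/((c.Q n:ℝ)*(c.Q (n+1):ℝ)) := by
    intro n hn
    have hd := c.det (n+1) (by omega) (c.lt_top_s hst (n+1))
    rw [show n+1-1 = n by ring] at hd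
    have hd' : (c.Q (n+1) : ℝ) * (c.P n:ℝ) - (c.P (n+1):ℝ) * (c.Q n:ℝ)
        = ((sg (n+1) : ℤ) : ℝ) := by exact_mod_cast congrArg (Int.cast : ℤ → ℝ) hd
    have hsg : ((sg (n+1) : ℤ):ℝ) = -((sg n : ℤ):ℝ) := by
      exact_mod_cast congrArg (Int.cast : ℤ → ℝ) (sg_succ n)
    have hsq : ((sg n : ℤ):ℝ) * ((sg n : ℤ):ℝ) = 1 := by
      exact_mod_cast congrArg (Int.cast : ℤ → ℝ) (sg_mul_self n)
    have h1 : ((c.Q n:ℤ):ℝ) ≠ 0 := ne_of_gt (hQR n hn)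
    have h2 : ((c.Q (n+1):ℤ):ℝ) ≠ 0 := ne_of_gt (hQR (n+1) (by omega))
    simp only [hf]
    rw [hsg]
    field_simp
    ring_nf
    rw [show (1+n) = n+1 by ring]
    linear_combination -((sg n:ℤ):ℝ) * hd' - ((sg n:ℤ):ℝ) * hsg + hsq
  have hQle : ∀ n : ℤ, 0 ≤ n → (c.Q n : ℝ) ≤ (c.Q (n+2) : ℝ) := by
    intro n hn
    have hrec := c.hQrec (n+2) (by omega) (c.lt_top_s hst (n+2))
    rw [show n+2-2 = n by ring, show n+2-1 = n+1 by ring] at hrec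
    have ha := c.ha (n+2) (by omega) (c.lt_top_s hst (n+2))
    have hq1 := c.Qpos (show (0:ℤ) ≤ n+1 by omega) (c.lt_top_s hst (n+1))
    exact_mod_cast (by nlinarith : c.Q n ≤ c.Q (n+2))
  have hdec : ∀ n : ℤ, 0 ≤ n → f (n+2) ≤ f n := by
    intro n hn
    have h1 := hsum n hn
    have h2 := hsum (n+1) (by omega)
    rw [show n+1+1 = n+2 by ring] at h2
    have p1 := hQR n hn
    have p2 := hQR (n+1) (by omega)
    have p3 := hQR (n+2) (by omega)
    have hc : 1/((c.Q (n+1):ℝ)*(c.Q (n+2):ℝ)) ≤ 1/((c.Q n:ℝ)*(c.Q (n+1):ℝ)) := by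
      apply one_div_le_one_div_of_le (mul_pos p1 p2)
      nlinarith [hQle n hn]
    linarith
  have hiter : ∀ m : ℕ, ∀ n : ℤ, 0 ≤ n → f (n + 2*m) ≤ f n := by
    intro m
    induction m with
    | zero => intro n hn; norm_num
    | succ m ih =>
      intro n hn
      have h1 : f ((n+2) + 2*m) ≤ f (n+2) := ih (n+2) (by omega)
      have h2 : f (n+2) ≤ f n := hdec n hn
      have he : n + 2*((m:ℕ)+1 : ℕ) = (n+2) + 2*(m:ℕ) := by push_cast; ring
      rw [he]
      linarith
  have htend : ∀ n : ℤ, 0 ≤ n → Filter.Tendsto (fun m : ℕ => f (n + 2*m))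
      Filter.atTop (nhds 0) := by
    intro n hn
    have hφ : Filter.Tendsto (fun m : ℕ => n.toNat + 2*m) Filter.atTop Filter.atTop := by
      apply Filter.tendsto_atTop_mono (f := fun m : ℕ => m)
      · intro m; omega
      · exact Filter.tendsto_id
    have hr := (c.hinf hst).comp hφ
    have hr' : Filter.Tendsto (fun m : ℕ => (c.P (n + 2*m) : ℝ)/(c.Q (n + 2*m) : ℝ))
        Filter.atTop (nhds c.ξ) := by
      apply hr.congr
      intro m
      simp only [Function.comp]
      congr 2 <;> push_cast [Int.toNat_of_nonneg hn] <;> ring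
    have : Filter.Tendsto (fun m : ℕ => (sg n : ℝ) * (c.ξ - (c.P (n + 2*m) : ℝ)/(c.Q (n + 2*m) : ℝ)))
        Filter.atTop (nhds ((sg n : ℝ) * (c.ξ - c.ξ))) :=
      (Filter.Tendsto.const_sub _ hr').const_mul _
    rw [sub_self, mul_zero] at this
    apply this.congr
    intro m
    simp only [hf]
    rw [sg_add_two_mul n m]
  intro n hn
  rcases eq_or_lt_of_le hn with h | h
  · rw [← h, c.θ_neg_one]; norm_num [sg]
  have hn0 : 0 ≤ n := by omega
  have hfn : 0 ≤ f n := by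
    apply le_of_tendsto (htend n hn0)
    exact Filter.Eventually.of_forall (fun m => hiter m n hn0)
  have hθf : (sg n : ℝ) * c.θ n = (c.Q n : ℝ) * f n := by
    simp only [hf]
    unfold θ
    have h1 : ((c.Q n:ℤ):ℝ) ≠ 0 := ne_of_gt (hQR n hn0)
    have hr : (c.Q n:ℝ) * ((c.P n:ℝ)/(c.Q n:ℝ)) = (c.P n:ℝ) := by field_simp
    rw [show (c.Q n:ℝ) * ((sg n:ℝ) * (c.ξ - (c.P n:ℝ)/(c.Q n:ℝ)))
        = (sg n:ℝ) * ((c.Q n:ℝ)*c.ξ - (c.Q n:ℝ)*((c.P n:ℝ)/(c.Q n:ℝ))) from by ring, hr]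
  rw [hθf]
  exact mul_nonneg (le_of_lt (hQR n hn0)) hfn

/-- The sign of `θ n` is `(-1)^n`. -/
lemma θ_sign {n : ℤ} (hn : -1 ≤ n) (hns : (n : WithTop ℤ) < c.s) :
    0 ≤ (sg n : ℝ) * c.θ n := by
  rcases eq_or_ne c.s ⊤ with hst | hst
  · exact c.θ_sign_inf hst n hn
  · obtain ⟨k, hk⟩ := WithTop.ne_top_iff_exists.mp hst
    have hnk : n < k := by rw [← hk] at hns; exact_mod_cast hns
    exact c.θ_sign_fin hk n hn (by omega)

lemma Δ_eq_sg_mul {n : ℤ} (hn : -1 ≤ n) (hns : (n : WithTop ℤ) < c.s) :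
    c.Δ n = (sg n : ℝ) * c.θ n := by
  have hs := c.θ_sign hn hns
  rw [c.Δ_eq_abs_θ]
  rcases sg_cases n with h | h <;> rw [h] at hs ⊢ <;> push_cast at hs ⊢
  · rw [one_mul] at hs ⊢; exact abs_of_nonneg hs
  · rw [neg_one_mul] at hs ⊢
    rw [abs_of_nonpos (by linarith)]

lemma θ_ne_zero {n : ℤ} (hn : -1 ≤ n) (hns : ((n+1 : ℤ) : WithTop ℤ) < c.s) :
    c.θ n ≠ 0 := by
  rcases eq_or_lt_of_le hn with h | h
  · rw [← h, c.θ_neg_one]; norm_num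
  have hn0 : 0 ≤ n := by omega
  intro h0
  have h1 := c.θ_next_of_zero hn0 hns h0
  have hQ1 : (1:ℤ) ≤ c.Q n := c.Qpos hn0 (c.coe_lt_s_of_le (by omega) hns)
  have hQR : (0:ℝ) < (c.Q n : ℝ) := by exact_mod_cast (by omega : (0:ℤ) < c.Q n)
  have hsq : ((sg (n+1) : ℤ):ℝ) * ((sg (n+1) : ℤ):ℝ) = 1 := by
    exact_mod_cast congrArg (Int.cast : ℤ → ℝ) (sg_mul_self (n+1))
  have hpos : 0 < ((sg (n+1):ℤ):ℝ) * c.θ (n+1) := by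
    have : ((sg (n+1):ℤ):ℝ) * c.θ (n+1) * (c.Q n : ℝ) = 1 := by
      linear_combination ((sg (n+1):ℤ):ℝ) * h1 + hsq
    nlinarith
  by_cases hc : ((n+2 : ℤ) : WithTop ℤ) < c.s
  · have hrec := c.θ_rec (show (1:ℤ) ≤ n+2 by omega) hc
    rw [show n+2-2 = n by ring, show n+2-1 = n+1 by ring, h0, zero_add] at hrec
    have hsg2 := c.θ_sign (show -1 ≤ n+2 by omega) hc
    have ha : (1:ℤ) ≤ c.a (n+2) := c.ha (n+2) (by omega) hc
    have ha' : (1:ℝ) ≤ (c.a (n+2) : ℝ) := by exact_mod_cast ha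
    have e1 : ((sg (n+2) : ℤ):ℝ) = -((sg (n+1) : ℤ):ℝ) := by
      have h' := sg_succ (n+1); rw [show n+1+1 = n+2 by ring] at h'
      exact_mod_cast congrArg (Int.cast : ℤ → ℝ) h'
    rw [hrec, e1] at hsg2
    nlinarith
  · have hle : c.s ≤ ((n+2 : ℤ) : WithTop ℤ) := not_lt.mp hc
    have hne : c.s ≠ ⊤ := by
      intro h'; rw [h'] at hle
      exact (WithTop.coe_lt_top (n+2)).not_ge hle
    obtain ⟨k, hk⟩ := WithTop.ne_top_iff_exists.mp hne
    have hk2 : k = n + 2 := by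
      rw [← hk] at hle hns
      have : k ≤ n+2 := by exact_mod_cast hle
      have : n+1 < k := by exact_mod_cast hns
      omega
    have := c.θ_last hk
    rw [hk2, show n+2-1 = n+1 by ring] at this
    rw [this, mul_zero] at h1
    have : ((sg (n+1):ℤ):ℝ) ≠ 0 := by
      rcases sg_cases (n+1) with h' | h' <;> rw [h'] <;> norm_num
    exact this h1.symm

lemma Δ_pos {n : ℤ} (hn : -1 ≤ n) (hns : ((n+1 : ℤ) : WithTop ℤ) < c.s) :
    0 < c.Δ n := by
  rw [c.Δ_eq_abs_θ]
  exact abs_pos.mpr (c.θ_ne_zero hn hns)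

end CFData

/-! Geometry layer -/

/-- the value `max(|Q| e^{-q}, |Qξ-P| e^q)` so that `Lx ξ y q = log (mval ξ q y)` -/
noncomputable def mval (ξ q : ℝ) (y : ℤ × ℤ) : ℝ :=
  max (|(y.1 : ℝ)| * Real.exp (-q)) (|(y.1 : ℝ) * ξ - (y.2 : ℝ)| * Real.exp q)

lemma Lx_eq_log_mval (ξ q : ℝ) (y : ℤ × ℤ) : Lx ξ y q = Real.log (mval ξ q y) := rfl

lemma le_mval_fst (ξ q : ℝ) (y : ℤ × ℤ) : |(y.1:ℝ)| * Real.exp (-q) ≤ mval ξ q y :=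
  le_max_left _ _

lemma le_mval_snd (ξ q : ℝ) (y : ℤ × ℤ) : |(y.1:ℝ) * ξ - (y.2:ℝ)| * Real.exp q ≤ mval ξ q y :=
  le_max_right _ _

lemma mval_nonneg (ξ q : ℝ) (y : ℤ × ℤ) : 0 ≤ mval ξ q y :=
  le_trans (by positivity) (le_max_left _ _)

lemma mval_pos (ξ q : ℝ) {y : ℤ × ℤ} (hy : y ≠ 0) : 0 < mval ξ q y := by
  rcases eq_or_ne y.1 0 with h1 | h1
  · have h2 : y.2 ≠ 0 := by
      intro h2; apply hy; exact Prod.ext h1 h2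
    have : (1:ℝ) ≤ |(y.2:ℝ)| := by
      rw [← Int.cast_abs]; exact_mod_cast Int.one_le_abs h2
    apply lt_of_lt_of_le _ (le_max_right _ _)
    rw [h1]
    have : (0:ℝ) < |(0:ℤ) * ξ - (y.2:ℝ)| := by
      push_cast
      rw [zero_mul, zero_sub, abs_neg]
      linarith
    push_cast at this ⊢
    positivity
  · apply lt_of_lt_of_le _ (le_max_left _ _)
    have : (1:ℝ) ≤ |(y.1:ℝ)| := by
      rw [← Int.cast_abs]; exact_mod_cast Int.one_le_abs h1
    positivity

lemma body_nonempty (ξ q : ℝ) : ((0:ℝ), (0:ℝ)) ∈ body ξ q := by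
  constructor <;> simp [abs_of_nonneg, Real.exp_pos, le_of_lt (Real.exp_pos _)]

lemma mem_smul_body_iff {ξ q l : ℝ} (hl : 0 < l) (y : ℤ × ℤ) :
    (((y.1 : ℝ), (y.2 : ℝ)) ∈ l • body ξ q) ↔ mval ξ q y ≤ l := by
  rw [Set.mem_smul_set_iff_inv_smul_mem₀ (ne_of_gt hl)]
  have hprod : Real.exp (-q) * Real.exp q = 1 := by
    rw [← Real.exp_add]; norm_num
  have he1 : 0 < Real.exp q := Real.exp_pos q
  have he2 : 0 < Real.exp (-q) := Real.exp_pos (-q)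
  have hsm : l⁻¹ • (((y.1 : ℝ), (y.2 : ℝ)) : ℝ × ℝ)
      = ((l⁻¹ * y.1, l⁻¹ * y.2) : ℝ × ℝ) := rfl
  rw [hsm]
  show (|l⁻¹ * (y.1:ℝ)| ≤ Real.exp q ∧ |l⁻¹ * (y.1:ℝ) * ξ - l⁻¹ * (y.2:ℝ)| ≤ Real.exp (-q)) ↔ _
  have habs1 : |l⁻¹ * (y.1:ℝ)| = l⁻¹ * |(y.1:ℝ)| := by
    rw [abs_mul, abs_of_pos (inv_pos.mpr hl)]
  have habs2 : |l⁻¹ * (y.1:ℝ) * ξ - l⁻¹ * (y.2:ℝ)| = l⁻¹ * |(y.1:ℝ) * ξ - (y.2:ℝ)| := by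
    rw [show l⁻¹ * (y.1:ℝ) * ξ - l⁻¹ * (y.2:ℝ) = l⁻¹ * ((y.1:ℝ) * ξ - (y.2:ℝ)) by ring,
      abs_mul, abs_of_pos (inv_pos.mpr hl)]
  rw [habs1, habs2, mval, max_le_iff]
  have hswap : ∀ A E : ℝ, 0 < E → 0 ≤ A → (A * E⁻¹ ≤ l ↔ l⁻¹ * A ≤ E) := by
    intro A E hE hA
    rw [← div_eq_mul_inv, div_le_iff₀ hE, ← div_eq_inv_mul, div_le_iff₀ hl]
    constructor <;> intro h <;> linarith [h]
  have hE1 : Real.exp (-q) = (Real.exp q)⁻¹ := Real.exp_neg q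
  have hE2 : Real.exp q = (Real.exp (-q))⁻¹ := by rw [Real.exp_neg, inv_inv]
  constructor
  · rintro ⟨h1, h2⟩
    constructor
    · rw [hE1]
      exact (hswap _ _ he1 (abs_nonneg _)).mpr h1
    · rw [hE2]
      exact (hswap _ _ he2 (abs_nonneg _)).mpr h2
  · rintro ⟨h1, h2⟩
    constructor
    · rw [hE1] at h1
      exact (hswap _ _ he1 (abs_nonneg _)).mp h1
    · rw [hE2] at h2
      exact (hswap _ _ he2 (abs_nonneg _)).mp h2

lemma not_mem_zero_smul_body {ξ q : ℝ} {y : ℤ × ℤ} (hy : y ≠ 0) :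
    ¬ (((y.1 : ℝ), (y.2 : ℝ)) ∈ (0:ℝ) • body ξ q) := by
  rw [Set.zero_smul_set ⟨_, body_nonempty ξ q⟩]
  intro h
  simp only [Set.mem_zero] at h
  have h1 : (y.1 : ℝ) = 0 := by
    have := congrArg Prod.fst h; simpa using this
  have h2 : (y.2 : ℝ) = 0 := by
    have := congrArg Prod.snd h; simpa using this
  apply hy
  exact Prod.ext (by exact_mod_cast h1) (by exact_mod_cast h2)

/-- integer determinant of two lattice points -/
def dt (y z : ℤ × ℤ) : ℤ := y.1 * z.2 - y.2 * z.1

lemma abs_add_eq_abs_add_abs {a b : ℝ} (h : 0 ≤ a * b) : |a + b| = |a| + |b| := by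
  rcases abs_cases a with ⟨h1,h2⟩|⟨h1,h2⟩ <;> rcases abs_cases b with ⟨h3,h4⟩|⟨h3,h4⟩ <;>
    rcases abs_cases (a+b) with ⟨h5,h6⟩|⟨h5,h6⟩ <;> nlinarith

lemma li_of_dt_ne {y z : ℤ × ℤ} (h : dt y z ≠ 0) :
    LinearIndependent ℝ (fun i => (((((![y,z]) i).1 : ℤ) : ℝ), ((((![y,z]) i).2 : ℤ) : ℝ))) := by
  have hfun : (fun i => (((((![y,z]) i).1 : ℤ) : ℝ), ((((![y,z]) i).2 : ℤ) : ℝ)))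
      = ![(((y.1 : ℤ):ℝ), ((y.2 : ℤ):ℝ)), (((z.1 : ℤ):ℝ), ((z.2 : ℤ):ℝ))] := by
    funext i; fin_cases i <;> simp
  rw [hfun]
  rw [linearIndependent_fin2]
  constructor
  · simp only [Matrix.cons_val_one, Matrix.head_cons]
    intro hz
    have h1 : (z.1 : ℝ) = 0 := by have := congrArg Prod.fst hz; simpa using this
    have h2 : (z.2 : ℝ) = 0 := by have := congrArg Prod.snd hz; simpa using this
    apply h
    unfold dt
    have : z.1 = 0 := by exact_mod_cast h1
    have : z.2 = 0 := by exact_mod_cast h2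
    simp [‹z.1 = 0›, ‹z.2 = 0›]
  · intro a ha
    simp only [Matrix.cons_val_one, Matrix.head_cons, Matrix.cons_val_zero, Prod.smul_mk,
      smul_eq_mul, Prod.mk.injEq] at ha
    obtain ⟨ha1, ha2⟩ := ha
    apply h
    have : ((dt y z : ℤ) : ℝ) = 0 := by
      unfold dt
      push_cast
      linear_combination ((z.1:ℤ):ℝ) * ha2 - ((z.2:ℤ):ℝ) * ha1
    exact_mod_cast this

lemma dt_ne_of_li {v : Fin 2 → ℤ × ℤ}
    (h : LinearIndependent ℝ (fun i => ((((v i).1 : ℤ) : ℝ), (((v i).2 : ℤ) : ℝ)))) :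
    dt (v 0) (v 1) ≠ 0 := by
  intro hd
  have hfun : (fun i => ((((v i).1 : ℤ) : ℝ), (((v i).2 : ℤ) : ℝ)))
      = ![((((v 0).1 : ℤ):ℝ), (((v 0).2 : ℤ):ℝ)), ((((v 1).1 : ℤ):ℝ), (((v 1).2 : ℤ):ℝ))] := by
    funext i; fin_cases i <;> simp
  rw [hfun, linearIndependent_fin2] at h
  obtain ⟨hne, hall⟩ := h
  simp only [Matrix.cons_val_one, Matrix.head_cons, Matrix.cons_val_zero] at hne hall
  unfold dt at hd
  rcases eq_or_ne (v 1).1 0 with h1 | h1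
  · rcases eq_or_ne (v 1).2 0 with h2 | h2
    · exact hne (by rw [h1, h2]; norm_num)
    · -- (v 1).1 = 0, (v 1).2 ≠ 0; dt = 0 gives (v 0).1 * (v 1).2 = 0 so (v 0).1 = 0
      have h01 : (v 0).1 = 0 := by
        have : (v 0).1 * (v 1).2 = 0 := by rw [h1] at hd; omega
        rcases mul_eq_zero.mp this with h | h
        · exact h
        · exact absurd h h2
      apply hall ((((v 0).2 : ℤ):ℝ) / (((v 1).2 : ℤ):ℝ))
      have hz2 : (((v 1).2 : ℤ):ℝ) ≠ 0 := by exact_mod_cast h2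
      rw [Prod.smul_mk, smul_eq_mul, smul_eq_mul]
      rw [h1, h01]
      push_cast
      rw [mul_zero]
      congr 1
      field_simp
  · apply hall ((((v 0).1 : ℤ):ℝ) / (((v 1).1 : ℤ):ℝ))
    have hz1 : (((v 1).1 : ℤ):ℝ) ≠ 0 := by exact_mod_cast h1
    rw [Prod.smul_mk, smul_eq_mul, smul_eq_mul]
    have e1 : (((v 0).1 : ℤ):ℝ) / (((v 1).1 : ℤ):ℝ) * (((v 1).1 : ℤ):ℝ) = (((v 0).1 : ℤ):ℝ) := by
      field_simp
    have e2 : (((v 0).1 : ℤ):ℝ) / (((v 1).1 : ℤ):ℝ) * (((v 1).2 : ℤ):ℝ) = (((v 0).2 : ℤ):ℝ) := by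
      rw [div_mul_eq_mul_div, div_eq_iff hz1]
      have : (v 0).1 * (v 1).2 = (v 0).2 * (v 1).1 := by omega
      exact_mod_cast this
    rw [e1, e2]

lemma dt_trans {y w z : ℤ × ℤ} (hz : z ≠ 0) (hyz : dt y z = 0) (hwz : dt w z = 0) :
    dt y w = 0 := by
  have h1 : z.1 * dt y w = 0 := by unfold dt at *; linear_combination w.1 * hyz - y.1 * hwz
  have h2 : z.2 * dt y w = 0 := by unfold dt at *; linear_combination w.2 * hyz - y.2 * hwz
  rcases eq_or_ne z.1 0 with hz1 | hz1
  · rcases eq_or_ne z.2 0 with hz2 | hz2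
    · exact absurd (Prod.ext hz1 hz2) hz
    · rcases mul_eq_zero.mp h2 with h | h
      · exact absurd h hz2
      · exact h
  · rcases mul_eq_zero.mp h1 with h | h
    · exact absurd h hz1
    · exact h

namespace CFData
variable (c : CFData)

/-- the convergent point `x_n` -/
def xx (n : ℤ) : ℤ × ℤ := (c.Q n, c.P n)

lemma xx_ne_zero {n : ℤ} (hn : -1 ≤ n) (hns : (n : WithTop ℤ) < c.s) : c.xx n ≠ 0 := by
  rcases eq_or_lt_of_le hn with h | h
  · unfold xx; rw [← h, c.hPneg]; intro hc
    have := congrArg Prod.snd hc; simp at this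
  · unfold xx; intro hc
    have := congrArg Prod.fst hc; simp at this
    have := c.Qpos (by omega) hns; omega

/-- decomposition of any lattice point in the basis `x_{n-1}, x_n` -/
lemma decomp {n : ℤ} (hn : 0 ≤ n) (hns : (n : WithTop ℤ) < c.s) (y : ℤ × ℤ) :
    ∃ u v : ℤ, y.1 = u * c.Q (n-1) + v * c.Q n ∧ y.2 = u * c.P (n-1) + v * c.P n ∧
      u = -sg n * dt y (c.xx n) := by
  have hd := c.det n hn hns
  refine ⟨sg n * (y.2 * c.Q n - y.1 * c.P n), sg n * (c.P (n-1) * y.1 - c.Q (n-1) * y.2), ?_, ?_, ?_⟩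
  · have hsq := sg_mul_self n
    linear_combination (-(sg n) * y.1) * hd - y.1 * hsq
  · have hsq := sg_mul_self n
    linear_combination (-(sg n) * y.2) * hd - y.2 * hsq
  · unfold dt xx; ring

lemma θy_eq {n : ℤ} {y : ℤ × ℤ} {u v : ℤ}
    (h1 : y.1 = u * c.Q (n-1) + v * c.Q n) (h2 : y.2 = u * c.P (n-1) + v * c.P n) :
    (y.1 : ℝ) * c.ξ - (y.2 : ℝ) = (u : ℝ) * c.θ (n-1) + (v : ℝ) * c.θ n := by
  unfold θ
  rw [h1, h2]
  push_cast
  ring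

end CFData

namespace CFData
variable (c : CFData)

lemma dt_comm (y z : ℤ × ℤ) : dt y z = - dt z y := by unfold dt; ring

/-- the best approximation property -/
lemma best_approx {n : ℤ} (hn : 0 ≤ n) (hns : ((n+1 : ℤ) : WithTop ℤ) < c.s) {y : ℤ × ℤ}
    (hy1 : y.1 ≠ 0) (hlt : |y.1| < c.Q (n+1)) :
    c.Δ n ≤ |(y.1 : ℝ) * c.ξ - (y.2 : ℝ)| := by
  have hns' : (n : WithTop ℤ) < c.s := c.coe_lt_s_of_le (by omega) hns
  obtain ⟨u, v, h1, h2, hu⟩ := c.decomp (show (0:ℤ) ≤ n+1 by omega) hns y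
  rw [show n+1-1 = n by ring] at h1 h2
  have hθy := c.θy_eq (n := n+1) (by rw [show n+1-1 = n by ring]; exact h1)
    (by rw [show n+1-1 = n by ring]; exact h2)
  rw [show n+1-1 = n by ring] at hθy
  have hQn0 : (0:ℤ) ≤ c.Q n := c.Qnonneg (by omega) hns'
  have hQn1 : (1:ℤ) ≤ c.Q (n+1) := c.Qpos (by omega) hns
  rw [c.Δ_eq_abs_θ, hθy]
  rcases eq_or_ne v 0 with hv | hv
  · -- v = 0
    have hu0 : u ≠ 0 := by
      intro h0; rw [h0, hv] at h1; simp at h1; exact hy1 h1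
    have h1u : (1:ℝ) ≤ |(u:ℝ)| := by
      rw [← Int.cast_abs]; exact_mod_cast Int.one_le_abs hu0
    rw [hv]
    push_cast
    rw [zero_mul, add_zero, abs_mul]
    exact le_mul_of_one_le_left (abs_nonneg _) h1u
  · rcases eq_or_ne u 0 with hu0 | hu0
    · -- u = 0 impossible
      exfalso
      rw [hu0, zero_mul, zero_add] at h1
      have hv1 : (1:ℤ) ≤ |v| := Int.one_le_abs hv
      have : |y.1| = |v| * c.Q (n+1) := by
        rw [h1, abs_mul, abs_of_nonneg (by omega : (0:ℤ) ≤ c.Q (n+1))]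
      nlinarith
    · -- u ≠ 0, v ≠ 0 : opposite signs
      have huv : u * v < 0 := by
        rcases lt_trichotomy u 0 with hult | h | hult
        · rcases lt_trichotomy v 0 with hvlt | h' | hvlt
          · exfalso
            have hy : -y.1 ≥ c.Q (n+1) := by nlinarith
            have := neg_le_abs y.1
            omega
          · exact absurd h' hv
          · nlinarith
        · exact absurd h hu0
        · rcases lt_trichotomy v 0 with hvlt | h' | hvlt
          · nlinarith
          · exact absurd h' hv
          · exfalso
            have hy : y.1 ≥ c.Q (n+1) := by nlinarith
            have := le_abs_self y.1
            omega
      have sθn := c.θ_sign (show -1 ≤ n by omega) hns'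
      have sθn1 := c.θ_sign (show -1 ≤ n+1 by omega) hns
      have e2 : ((sg (n+1) : ℤ):ℝ) = -((sg n : ℤ):ℝ) := by
        exact_mod_cast congrArg (Int.cast : ℤ → ℝ) (sg_succ n)
      have hsq : ((sg n : ℤ):ℝ) * ((sg n : ℤ):ℝ) = 1 := by
        exact_mod_cast congrArg (Int.cast : ℤ → ℝ) (sg_mul_self n)
      rw [e2] at sθn1
      have hsignθ : c.θ n * c.θ (n+1) ≤ 0 := by
        nlinarith [mul_nonneg sθn sθn1, hsq]
      have huvR : ((u*v : ℤ):ℝ) ≤ 0 := by exact_mod_cast le_of_lt huv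
      have hprod : 0 ≤ ((u:ℝ) * c.θ n) * ((v:ℝ) * c.θ (n+1)) := by
        push_cast at huvR
        nlinarith [huvR, hsignθ]
      rw [abs_add_eq_abs_add_abs hprod]
      have h1u : (1:ℝ) ≤ |(u:ℝ)| := by
        rw [← Int.cast_abs]; exact_mod_cast Int.one_le_abs hu0
      rw [abs_mul]
      nlinarith [abs_nonneg ((v:ℝ) * c.θ (n+1)), abs_nonneg (c.θ n), h1u]

lemma xdet_pos {n : ℤ} (hn : -1 ≤ n) : ∀ m : ℤ, n+1 ≤ m → ((m : WithTop ℤ) < c.s →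
    1 ≤ sg n * dt (c.xx n) (c.xx m) ∧ 0 ≤ sg n * dt (c.xx n) (c.xx (m-1))) := by
  refine fun m hm => Int.le_induction (motive := fun m _ => (m : WithTop ℤ) < c.s →
    1 ≤ sg n * dt (c.xx n) (c.xx m) ∧ 0 ≤ sg n * dt (c.xx n) (c.xx (m-1))) ?_ ?_ m hm
  · intro hs1
    constructor
    · have hd := c.det (n+1) (by omega) hs1
      rw [show n+1-1 = n by ring] at hd
      have hsucc : sg (n+1) = -sg n := sg_succ n
      rw [hsucc] at hd
      have he : sg n * dt (c.xx n) (c.xx (n+1)) = 1 := by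
        unfold dt xx
        simp only
        linear_combination (-(sg n)) * hd + sg_mul_self n
      omega
    · rw [show n+1-1 = n by ring]
      unfold dt xx
      simp only
      have : c.Q n * c.P n - c.P n * c.Q n = 0 := by ring
      rw [this, mul_zero]
  · intro m hm ih hs1
    have hms : (m : WithTop ℤ) < c.s := c.coe_lt_s_of_le (by omega) hs1
    obtain ⟨ih1, ih2⟩ := ih hms
    have hrecQ := c.hQrec (m+1) (by omega) hs1
    have hrecP := c.hPrec (m+1) (by omega) hs1
    rw [show m+1-2 = m-1 by ring, show m+1-1 = m by ring] at hrecQ hrecP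
    have ha := c.ha (m+1) (by omega) hs1
    have hdt : dt (c.xx n) (c.xx (m+1))
        = dt (c.xx n) (c.xx (m-1)) + c.a (m+1) * dt (c.xx n) (c.xx m) := by
      unfold dt xx
      simp only
      rw [hrecQ, hrecP]; ring
    constructor
    · rw [hdt]; nlinarith
    · rw [show m+1-1 = m by ring]; nlinarith

lemma dt_xx_ne {n m : ℤ} (hn : -1 ≤ n) (hnm : n < m) (hm : (m : WithTop ℤ) < c.s) :
    dt (c.xx n) (c.xx m) ≠ 0 := by
  have h := (c.xdet_pos hn m (by omega) hm).1
  intro h0; rw [h0, mul_zero] at h; omega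

end CFData

namespace CFData
variable (c : CFData)

lemma s_eq {n : ℤ} (h1 : (n : WithTop ℤ) < c.s) (h2 : ¬ ((n+1 : ℤ) : WithTop ℤ) < c.s) :
    ((n+1 : ℤ) : WithTop ℤ) = c.s := by
  rcases eq_or_ne c.s ⊤ with ht | ht
  · exact absurd (by rw [ht]; exact WithTop.coe_lt_top _) h2
  · obtain ⟨k, hk⟩ := WithTop.ne_top_iff_exists.mp ht
    rw [← hk] at h1 h2 ⊢
    have ha : n < k := by exact_mod_cast h1
    have hb : ¬ (n+1 < k) := fun hcon => h2 (by exact_mod_cast hcon)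
    have : k = n+1 := by omega
    rw [this]

lemma find_n {y1 : ℤ} (h : 1 ≤ |y1|) : ∃ n : ℤ, 0 ≤ n ∧ (n : WithTop ℤ) < c.s ∧
    c.Q n ≤ |y1| ∧ (((n+1 : ℤ) : WithTop ℤ) < c.s → |y1| < c.Q (n+1)) := by
  classical
  set T : Finset ℤ := (Finset.Icc 0 (2*|y1|)).filter
    (fun n => (n : WithTop ℤ) < c.s ∧ c.Q n ≤ |y1|) with hT
  have h0T : (0:ℤ) ∈ T := by
    rw [hT, Finset.mem_filter, Finset.mem_Icc]
    exact ⟨⟨le_refl _, by omega⟩, c.zero_lt_s, by rw [c.hQ0]; omega⟩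
  have hTne : T.Nonempty := ⟨0, h0T⟩
  set n := T.max' hTne with hn
  have hnT : n ∈ T := T.max'_mem hTne
  rw [hT, Finset.mem_filter, Finset.mem_Icc] at hnT
  obtain ⟨⟨hn0, _⟩, hns, hnQ⟩ := hnT
  refine ⟨n, hn0, hns, hnQ, ?_⟩
  intro hs1
  by_contra hcon
  push_neg at hcon
  have hmem : n+1 ∈ T := by
    rw [hT, Finset.mem_filter, Finset.mem_Icc]
    refine ⟨⟨by omega, ?_⟩, hs1, hcon⟩
    have := c.Qgrowth (show (0:ℤ) ≤ n+1 by omega) hs1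
    omega
  have := T.le_max' (n+1) hmem
  omega

lemma mval_xx (q : ℝ) {n : ℤ} (hn : -1 ≤ n) (hns : (n : WithTop ℤ) < c.s) :
    mval c.ξ q (c.xx n) = max ((c.Q n : ℝ) * Real.exp (-q)) (c.Δ n * Real.exp q) := by
  unfold mval xx
  simp only
  rw [abs_of_nonneg (show (0:ℝ) ≤ (c.Q n : ℝ) by exact_mod_cast c.Qnonneg hn hns)]
  rfl

lemma mval_x0_le (q : ℝ) (hq : 0 ≤ q) : mval c.ξ q (c.xx 0) ≤ Real.exp q := by
  rw [c.mval_xx q (by norm_num) c.zero_lt_s]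
  apply max_le
  · rw [c.hQ0]
    push_cast
    rw [one_mul]
    exact Real.exp_le_exp.mpr (by linarith)
  · rw [c.Δ_eq_abs_θ, c.θ_zero, abs_of_nonneg c.hξ0]
    nlinarith [Real.exp_pos q, c.hξ0, c.hξhalf]

/-- growth estimate : beyond N, convergents are large -/
lemma mval_far (q : ℝ) {N n : ℤ} (hN : 2 * Real.exp (2*q) ≤ (N:ℝ)) (hNn : N < n)
    (hn0 : 0 ≤ n) (hns : (n : WithTop ℤ) < c.s) :
    Real.exp q < (c.Q n : ℝ) * Real.exp (-q) := by
  have hg := c.Qgrowth hn0 hns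
  have hgr : (n : ℝ) ≤ 2 * (c.Q n : ℝ) := by exact_mod_cast hg
  have hNn' : (N:ℝ) < (n:ℝ) := by exact_mod_cast hNn
  have hQbig : Real.exp (2*q) < (c.Q n : ℝ) := by linarith
  have hkey : Real.exp (2*q) * Real.exp (-q) = Real.exp q := by
    rw [← Real.exp_add]; ring_nf
  nlinarith [Real.exp_pos (-q), Real.exp_pos (2*q)]

/-- the first-minimum lower bound : `x_M` is below every nonzero lattice point. -/
lemma lam1_lower (q : ℝ) (hq : 0 ≤ q) {N M : ℤ}
    (hN : 2 * Real.exp (2*q) ≤ (N:ℝ))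
    (hM0 : 0 ≤ M) (hMs : (M : WithTop ℤ) < c.s)
    (hmin : ∀ n : ℤ, 0 ≤ n → n ≤ N → (n : WithTop ℤ) < c.s →
      mval c.ξ q (c.xx M) ≤ mval c.ξ q (c.xx n))
    (hMe : mval c.ξ q (c.xx M) ≤ Real.exp q) :
    ∀ y : ℤ × ℤ, y ≠ 0 → mval c.ξ q (c.xx M) ≤ mval c.ξ q y := by
  intro y hy
  rcases eq_or_ne y.1 0 with h1 | h1
  · -- y = (0, y2), y2 ≠ 0
    have h2 : y.2 ≠ 0 := fun h2 => hy (Prod.ext h1 h2)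
    have h2a : (1:ℝ) ≤ |(y.2:ℝ)| := by
      rw [← Int.cast_abs]; exact_mod_cast Int.one_le_abs h2
    refine le_trans hMe (le_trans ?_ (le_max_right _ _))
    rw [h1]
    push_cast
    rw [zero_mul, zero_sub, abs_neg]
    nlinarith [Real.exp_pos q]
  · -- y1 ≠ 0
    have h1a : (1:ℤ) ≤ |y.1| := Int.one_le_abs h1
    obtain ⟨n, hn0, hns, hnQ, hnmax⟩ := c.find_n h1a
    have hQcast : (c.Q n : ℝ) ≤ |(y.1:ℝ)| := by
      rw [← Int.cast_abs]; exact_mod_cast hnQ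
    have hQpart : (c.Q n : ℝ) * Real.exp (-q) ≤ mval c.ξ q y := by
      refine le_trans ?_ (le_max_left _ _)
      nlinarith [Real.exp_pos (-q)]
    have hkey : mval c.ξ q (c.xx n) ≤ mval c.ξ q y := by
      rw [c.mval_xx q (by omega) hns]
      apply max_le hQpart
      by_cases hc : ((n+1 : ℤ) : WithTop ℤ) < c.s
      · -- Δ n ≤ |θ y| by best approximation
        have hba := c.best_approx hn0 hc h1 (hnmax hc)
        refine le_trans ?_ (le_max_right _ _)
        nlinarith [Real.exp_pos q]
      · -- n is last index : Δ n = 0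
        have hsn := c.s_eq hns hc
        have hθ := c.θ_last (k := n+1) hsn
        rw [show n+1-1 = n by ring] at hθ
        rw [c.Δ_eq_abs_θ, hθ, abs_zero, zero_mul]
        exact mval_nonneg _ _ _
    rcases le_or_gt n N with hnN | hnN
    · exact le_trans (hmin n hn0 hnN hns) hkey
    · refine le_trans hMe (le_trans (le_of_lt (c.mval_far q hN hnN hn0 hns)) ?_)
      exact le_trans (le_trans (le_max_left _ (c.Δ n * Real.exp q))
        (le_of_eq (c.mval_xx q (by omega) hns).symm)) hkey

end CFData

lemma abs_sg (k : ℤ) : |((sg k : ℤ):ℝ)| = 1 := by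
  rcases sg_cases k with h | h <;> rw [h] <;> norm_num

namespace CFData
variable (c : CFData)

/-- `mval` of the point `x_{-1} = (0,1)`. -/
lemma mval_xneg1 (q : ℝ) : mval c.ξ q (c.xx (-1)) = Real.exp q := by
  unfold mval xx
  simp only [c.hQneg, c.hPneg]
  push_cast
  rw [abs_zero, zero_mul, zero_mul, zero_sub, abs_neg, abs_one, one_mul]
  exact max_eq_right (le_of_lt (Real.exp_pos q))

lemma mval_neg (ξ q : ℝ) (y : ℤ × ℤ) : mval ξ q (-y) = mval ξ q y := by
  unfold mval
  simp only [Prod.fst_neg, Prod.snd_neg]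
  push_cast
  rw [abs_neg, show -(y.1:ℝ) * ξ - -(y.2:ℝ) = -((y.1:ℝ) * ξ - (y.2:ℝ)) by ring, abs_neg]

/-- key comparison : `mval (x_n) ≤ mval y` when `Q n ≤ |y1| (< Q (n+1))`. -/
lemma conv_le (q : ℝ) {y : ℤ × ℤ} (h1 : y.1 ≠ 0) {n : ℤ} (hn0 : 0 ≤ n)
    (hns : (n : WithTop ℤ) < c.s) (hnQ : c.Q n ≤ |y.1|)
    (hnmax : ((n+1 : ℤ) : WithTop ℤ) < c.s → |y.1| < c.Q (n+1)) :
    mval c.ξ q (c.xx n) ≤ mval c.ξ q y := by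
  have hQcast : (c.Q n : ℝ) ≤ |(y.1:ℝ)| := by
    rw [← Int.cast_abs]; exact_mod_cast hnQ
  have hQpart : (c.Q n : ℝ) * Real.exp (-q) ≤ mval c.ξ q y := by
    refine le_trans ?_ (le_max_left _ _)
    nlinarith [Real.exp_pos (-q)]
  rw [c.mval_xx q (by omega) hns]
  apply max_le hQpart
  by_cases hc : ((n+1 : ℤ) : WithTop ℤ) < c.s
  · have hba := c.best_approx hn0 hc h1 (hnmax hc)
    refine le_trans ?_ (le_max_right _ _)
    nlinarith [Real.exp_pos q]
  · have hsn := c.s_eq hns hc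
    have hθ := c.θ_last (k := n+1) hsn
    rw [show n+1-1 = n by ring] at hθ
    rw [c.Δ_eq_abs_θ, hθ, abs_zero, zero_mul]
    exact mval_nonneg _ _ _

/-- core of the second-minimum analysis, for `u ≥ 1`. -/
lemma lam2_core (q : ℝ) (hq : 0 ≤ q) {M : ℤ}
    (hM0 : 0 ≤ M) (hMs : (M : WithTop ℤ) < c.s)
    (hlow : ∀ y : ℤ × ℤ, y ≠ 0 → mval c.ξ q (c.xx M) ≤ mval c.ξ q y)
    {w : ℤ × ℤ} {u v : ℤ} (hu1 : 1 ≤ u)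
    (h1 : w.1 = u * c.Q (M-1) + v * c.Q M) (h2 : w.2 = u * c.P (M-1) + v * c.P M)
    (hwQ : c.Q M ≤ |w.1|) (hwmax : ((M+1 : ℤ) : WithTop ℤ) < c.s → |w.1| < c.Q (M+1))
    (hw0 : w ≠ 0) :
    ∃ f : ℤ × ℤ, (f = c.xx (M-1) ∨
      (∃ t : ℤ, 1 ≤ t ∧ t ≤ c.a (M+1) ∧ ((M+1 : ℤ) : WithTop ℤ) < c.s ∧
        f = (c.Qt (M+1) t, c.Pt (M+1) t))) ∧
      mval c.ξ q f ≤ mval c.ξ q w := by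
  have hMm1s : ((M-1 : ℤ) : WithTop ℤ) < c.s := c.coe_lt_s_of_le (by omega) hMs
  have hQM1 : (0:ℤ) ≤ c.Q (M-1) := c.Qnonneg (by omega) hMm1s
  have hQM : (1:ℤ) ≤ c.Q M := c.Qpos hM0 hMs
  have hQmono : c.Q (M-1) ≤ c.Q M := c.Qmono hM0 hMs
  -- Q-part for x_{M-1} : via the first minimum
  have hQpart1 : (c.Q (M-1) : ℝ) * Real.exp (-q) ≤ mval c.ξ q w := by
    refine le_trans ?_ (le_trans (le_trans (le_max_left _ (c.Δ M * Real.exp q))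
      (le_of_eq (c.mval_xx q (by omega) hMs).symm)) (hlow w hw0))
    have : (c.Q (M-1) : ℝ) ≤ (c.Q M : ℝ) := by exact_mod_cast hQmono
    nlinarith [Real.exp_pos (-q)]
  -- θ decomposition
  have hθw : (w.1 : ℝ) * c.ξ - (w.2 : ℝ) = (u:ℝ) * c.θ (M-1) + (v:ℝ) * c.θ M :=
    c.θy_eq h1 h2
  have hθwmval : |(w.1 : ℝ) * c.ξ - (w.2 : ℝ)| * Real.exp q ≤ mval c.ξ q w :=
    le_max_right _ _
  have hA := c.Δ_eq_sg_mul (show -1 ≤ M-1 by omega) hMm1s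
  have hB := c.Δ_eq_sg_mul (show -1 ≤ M by omega) hMs
  have hAnn : 0 ≤ c.Δ (M-1) := abs_nonneg _
  have hBnn : 0 ≤ c.Δ M := abs_nonneg _
  have esg : ((sg (M-1) : ℤ):ℝ) = -((sg M : ℤ):ℝ) := by
    exact_mod_cast congrArg (Int.cast : ℤ → ℝ) (sg_sub_one M)
  -- |θ w| ≥ sg(M-1) * θ w = u * Δ(M-1) - v * Δ M
  have hsgabs : |((sg (M-1) : ℤ):ℝ)| = 1 := abs_sg (M-1)
  have hθwsg : ((sg (M-1) : ℤ):ℝ) * ((w.1 : ℝ) * c.ξ - (w.2 : ℝ))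
      = (u:ℝ) * c.Δ (M-1) - (v:ℝ) * c.Δ M := by
    rw [hθw, hA, hB, esg]
    ring
  have hθwge : ((sg (M-1) : ℤ):ℝ) * ((w.1 : ℝ) * c.ξ - (w.2 : ℝ))
      ≤ |(w.1 : ℝ) * c.ξ - (w.2 : ℝ)| := by
    calc ((sg (M-1) : ℤ):ℝ) * ((w.1 : ℝ) * c.ξ - (w.2 : ℝ))
        ≤ |((sg (M-1) : ℤ):ℝ) * ((w.1 : ℝ) * c.ξ - (w.2 : ℝ))| := le_abs_self _
      _ = |(w.1 : ℝ) * c.ξ - (w.2 : ℝ)| := by rw [abs_mul, hsgabs, one_mul]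
  have huR : (1:ℝ) ≤ (u:ℝ) := by exact_mod_cast hu1
  rcases le_or_gt v 0 with hv | hv
  · -- v ≤ 0 : take f = x_{M-1}
    refine ⟨c.xx (M-1), Or.inl rfl, ?_⟩
    rw [c.mval_xx q (by omega) hMm1s]
    apply max_le hQpart1
    have hvR : (v:ℝ) ≤ 0 := by exact_mod_cast hv
    have hle : c.Δ (M-1) ≤ |(w.1 : ℝ) * c.ξ - (w.2 : ℝ)| := by
      refine le_trans ?_ (le_trans (le_of_eq hθwsg.symm) hθwge)
      have t1 : 0 ≤ ((u:ℝ) - 1) * c.Δ (M-1) := mul_nonneg (by linarith) hAnn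
      have t2 : 0 ≤ (-(v:ℝ)) * c.Δ M := mul_nonneg (by linarith) hBnn
      linarith
    exact le_trans (mul_le_mul_of_nonneg_right hle (le_of_lt (Real.exp_pos q))) hθwmval
  · -- 1 ≤ v
    by_cases hc : ((M+1 : ℤ) : WithTop ℤ) < c.s
    · -- intermediate fraction x_{M+1,v}
      have hrecQ := c.hQrec (M+1) (by omega) hc
      rw [show M+1-2 = M-1 by ring, show M+1-1 = M by ring] at hrecQ
      have ha := c.ha (M+1) (by omega) hc
      -- Δ(M+1) ≥ 0 gives  a * Δ M ≤ Δ (M-1)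
      have hθ3 := c.θ_sign (show -1 ≤ M+1 by omega) hc
      have hrecθ := c.θ_rec (show (1:ℤ) ≤ M+1 by omega) hc
      rw [show M+1-2 = M-1 by ring, show M+1-1 = M by ring] at hrecθ
      have esg2 : ((sg (M+1) : ℤ):ℝ) = ((sg (M-1) : ℤ):ℝ) := by
        have h' : sg (M+1) = sg (M-1) := by rw [show M+1 = (M-1)+2 by ring, sg_add_two]
        exact_mod_cast congrArg (Int.cast : ℤ → ℝ) h'
      have haΔ : (c.a (M+1) : ℝ) * c.Δ M ≤ c.Δ (M-1) := by
        rw [hrecθ] at hθ3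
        rw [esg2] at hθ3
        have expand : ((sg (M-1) : ℤ):ℝ) * (c.θ (M-1) + (c.a (M+1):ℝ) * c.θ M)
            = c.Δ (M-1) - (c.a (M+1):ℝ) * c.Δ M := by
          rw [hA, hB, esg]; ring
        rw [expand] at hθ3
        linarith
      -- v ≤ a (M+1)
      have hw1pos : 0 < w.1 := by
        rw [h1]
        have t1 := mul_pos hv (show (0:ℤ) < c.Q M by omega)
        have t2 := mul_nonneg (show (0:ℤ) ≤ u by omega) hQM1
        linarith
      have habs1 : |w.1| = w.1 := abs_of_pos hw1pos
      have hva : v ≤ c.a (M+1) := by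
        by_contra hcon
        push_neg at hcon
        have hwlt := hwmax hc
        rw [habs1, h1] at hwlt
        have t1 := mul_nonneg (show (0:ℤ) ≤ u - 1 by omega) hQM1
        have t2 := mul_nonneg (show (0:ℤ) ≤ v - c.a (M+1) - 1 by omega)
          (show (0:ℤ) ≤ c.Q M by omega)
        nlinarith
      -- the point f
      set f : ℤ × ℤ := (c.Qt (M+1) v, c.Pt (M+1) v) with hf
      have hfQ : f.1 = c.Q (M-1) + v * c.Q M := by
        rw [hf]; show c.Qt (M+1) v = _
        unfold Qt
        rw [show M+1-2 = M-1 by ring, show M+1-1 = M by ring]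
      have hfP : f.2 = c.P (M-1) + v * c.P M := by
        rw [hf]; show c.Pt (M+1) v = _
        unfold Pt
        rw [show M+1-2 = M-1 by ring, show M+1-1 = M by ring]
      refine ⟨f, Or.inr ⟨v, hv, hva, hc, rfl⟩, ?_⟩
      -- θ f
      have hθf : (f.1 : ℝ) * c.ξ - (f.2 : ℝ) = (1:ℝ) * c.θ (M-1) + (v:ℝ) * c.θ M := by
        have := c.θy_eq (n := M) (y := f) (u := 1) (v := v) (by rw [hfQ]; ring) (by rw [hfP]; ring)
        exact_mod_cast this
      have hθfsg : ((sg (M-1) : ℤ):ℝ) * ((f.1 : ℝ) * c.ξ - (f.2 : ℝ))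
          = c.Δ (M-1) - (v:ℝ) * c.Δ M := by
        rw [hθf, hA, hB, esg]
        ring
      have hvR : (1:ℝ) ≤ (v:ℝ) := by exact_mod_cast hv
      have hvaR : (v:ℝ) ≤ (c.a (M+1) : ℝ) := by exact_mod_cast hva
      have hfθnn : 0 ≤ c.Δ (M-1) - (v:ℝ) * c.Δ M := by nlinarith
      have hfabs : |(f.1 : ℝ) * c.ξ - (f.2 : ℝ)| = c.Δ (M-1) - (v:ℝ) * c.Δ M := by
        rw [show |(f.1 : ℝ) * c.ξ - (f.2 : ℝ)|
            = |((sg (M-1):ℤ):ℝ) * ((f.1 : ℝ) * c.ξ - (f.2 : ℝ))| from by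
          rw [abs_mul, hsgabs, one_mul]]
        rw [abs_of_nonneg (by rw [hθfsg]; exact hfθnn), hθfsg]
      -- compare
      have goal1 : |(f.1:ℝ)| * Real.exp (-q) ≤ mval c.ξ q w := by
        refine le_trans ?_ (le_mval_fst c.ξ q w)
        have hfQpos : (0:ℤ) ≤ f.1 := by
          rw [hfQ]
          have t1 := mul_pos hv (show (0:ℤ) < c.Q M by omega)
          linarith
        have hfw : f.1 ≤ w.1 := by
          rw [hfQ, h1]
          have t1 := mul_nonneg (show (0:ℤ) ≤ u - 1 by omega) hQM1
          linarith
        have habsle : |(f.1:ℝ)| ≤ |(w.1:ℝ)| := by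
          rw [← Int.cast_abs, ← Int.cast_abs]
          exact_mod_cast (by rw [habs1, abs_of_nonneg hfQpos]; exact hfw : |f.1| ≤ |w.1|)
        exact mul_le_mul_of_nonneg_right habsle (le_of_lt (Real.exp_pos (-q)))
      have goal2 : |(f.1:ℝ) * c.ξ - (f.2:ℝ)| * Real.exp q ≤ mval c.ξ q w := by
        refine le_trans ?_ hθwmval
        rw [hfabs]
        have hle2 : c.Δ (M-1) - (v:ℝ) * c.Δ M ≤ |(w.1 : ℝ) * c.ξ - (w.2 : ℝ)| := by
          refine le_trans ?_ (le_trans (le_of_eq hθwsg.symm) hθwge)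
          have t1 : 0 ≤ ((u:ℝ) - 1) * c.Δ (M-1) := mul_nonneg (by linarith) hAnn
          linarith
        exact mul_le_mul_of_nonneg_right hle2 (le_of_lt (Real.exp_pos q))
      exact max_le goal1 goal2
    · -- M+1 = s : θ M = 0, take x_{M-1}
      have hsn := c.s_eq hMs hc
      have hθM := c.θ_last (k := M+1) hsn
      rw [show M+1-1 = M by ring] at hθM
      refine ⟨c.xx (M-1), Or.inl rfl, ?_⟩
      rw [c.mval_xx q (by omega) hMm1s]
      apply max_le hQpart1
      have hBz : c.Δ M = 0 := by rw [c.Δ_eq_abs_θ, hθM, abs_zero]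
      have hle3 : c.Δ (M-1) ≤ |(w.1 : ℝ) * c.ξ - (w.2 : ℝ)| := by
        refine le_trans ?_ (le_trans (le_of_eq hθwsg.symm) hθwge)
        rw [hBz]
        have t1 : 0 ≤ ((u:ℝ) - 1) * c.Δ (M-1) := mul_nonneg (by linarith) hAnn
        linarith
      exact le_trans (mul_le_mul_of_nonneg_right hle3 (le_of_lt (Real.exp_pos q))) hθwmval

end CFData

namespace CFData
variable (c : CFData)

lemma dt_zero_left (z : ℤ × ℤ) : dt 0 z = 0 := by unfold dt; simp

lemma lam2_step (q : ℝ) (hq : 0 ≤ q) {N M : ℤ}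
    (hN : 2 * Real.exp (2*q) ≤ (N:ℝ))
    (hM0 : 0 ≤ M) (hMs : (M : WithTop ℤ) < c.s)
    (hlow : ∀ y : ℤ × ℤ, y ≠ 0 → mval c.ξ q (c.xx M) ≤ mval c.ξ q y)
    (hMe : mval c.ξ q (c.xx M) ≤ Real.exp q) :
    ∀ y : ℤ × ℤ, dt y (c.xx M) ≠ 0 →
    ∃ f : ℤ × ℤ, (f = c.xx (-1) ∨ f = c.xx (M-1) ∨
      (∃ n : ℤ, 0 ≤ n ∧ n ≤ N ∧ (n : WithTop ℤ) < c.s ∧ n ≠ M ∧ f = c.xx n) ∨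
      (∃ t : ℤ, 1 ≤ t ∧ t ≤ c.a (M+1) ∧ ((M+1 : ℤ) : WithTop ℤ) < c.s ∧
        f = (c.Qt (M+1) t, c.Pt (M+1) t))) ∧
      mval c.ξ q f ≤ mval c.ξ q y := by
  intro y hdty
  have hy0 : y ≠ 0 := by
    intro h; rw [h] at hdty; exact hdty (dt_zero_left _)
  rcases eq_or_ne y.1 0 with h1 | h1
  · -- y = (0, y2)
    have h2 : y.2 ≠ 0 := fun h2 => hy0 (Prod.ext h1 h2)
    have h2a : (1:ℝ) ≤ |(y.2:ℝ)| := by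
      rw [← Int.cast_abs]; exact_mod_cast Int.one_le_abs h2
    refine ⟨c.xx (-1), Or.inl rfl, ?_⟩
    rw [c.mval_xneg1 q]
    refine le_trans ?_ (le_mval_snd c.ξ q y)
    rw [h1]
    push_cast
    rw [zero_mul, zero_sub, abs_neg]
    nlinarith [Real.exp_pos q]
  · have h1a : (1:ℤ) ≤ |y.1| := Int.one_le_abs h1
    obtain ⟨n, hn0, hns, hnQ, hnmax⟩ := c.find_n h1a
    by_cases hnM : n = M
    · -- the delicate case
      subst hnM
      obtain ⟨u, v, h1', h2', hu⟩ := c.decomp hn0 hns y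
      have hu0 : u ≠ 0 := by
        rw [hu]
        rcases sg_cases n with h | h <;> rw [h] <;> simpa using hdty
      rcases lt_or_gt_of_ne hu0 with hult | hugt
      · -- u < 0 : use -y
        have hn1' : (-y).1 = (-u) * c.Q (n-1) + (-v) * c.Q n := by
          simp only [Prod.fst_neg]
          rw [h1']; ring
        have hn2' : (-y).2 = (-u) * c.P (n-1) + (-v) * c.P n := by
          simp only [Prod.snd_neg]
          rw [h2']; ring
        have habs : |(-y).1| = |y.1| := by
          simp only [Prod.fst_neg]; exact abs_neg y.1
        obtain ⟨f, hfc, hfle⟩ := c.lam2_core q hq hM0 hns hlow (show 1 ≤ -u by omega)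
          hn1' hn2' (by rw [habs]; exact hnQ) (by rw [habs]; exact hnmax)
          (neg_ne_zero.mpr hy0)
        rw [mval_neg] at hfle
        rcases hfc with h | h
        · exact ⟨f, Or.inr (Or.inl h), hfle⟩
        · exact ⟨f, Or.inr (Or.inr (Or.inr h)), hfle⟩
      · -- u ≥ 1
        obtain ⟨f, hfc, hfle⟩ := c.lam2_core q hq hM0 hns hlow (show 1 ≤ u by omega)
          h1' h2' hnQ hnmax hy0
        rcases hfc with h | h
        · exact ⟨f, Or.inr (Or.inl h), hfle⟩
        · exact ⟨f, Or.inr (Or.inr (Or.inr h)), hfle⟩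
    · -- n ≠ M
      have hkey := c.conv_le q h1 hn0 hns hnQ hnmax
      rcases le_or_gt n N with hnN | hnN
      · exact ⟨c.xx n, Or.inr (Or.inr (Or.inl ⟨n, hn0, hnN, hns, hnM, rfl⟩)), hkey⟩
      · refine ⟨c.xx (-1), Or.inl rfl, ?_⟩
        rw [c.mval_xneg1 q]
        refine le_trans (le_of_lt (c.mval_far q hN hnN hn0 hns)) ?_
        refine le_trans ?_ hkey
        rw [c.mval_xx q (by omega) hns]
        exact le_max_left _ _
  end CFData

lemma emb_ne_zero {y : ℤ × ℤ} (h : y ≠ 0) : (((y.1:ℝ)), ((y.2:ℝ))) ≠ (0 : ℝ × ℝ) := by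
  intro hc
  apply h
  have h1 := congrArg Prod.fst hc
  have h2 := congrArg Prod.snd hc
  simp only [Prod.fst_zero] at h1
  simp only [Prod.snd_zero] at h2
  exact Prod.ext (by exact_mod_cast h1) (by exact_mod_cast h2)

lemma dt_zero_right (z : ℤ × ℤ) : dt z 0 = 0 := by unfold dt; simp

theorem stmt9' (c : CFData) (q : ℝ) (hq : 0 ≤ q) (j : ℕ) (hj : j = 1 ∨ j = 2) :
    ∃ x : ℤ × ℤ,
      ((∃ n : ℤ, -1 ≤ n ∧ (n : WithTop ℤ) < c.s ∧ x = (c.Q n, c.P n)) ∨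
       (∃ n t : ℤ, 1 ≤ n ∧ (n : WithTop ℤ) < c.s ∧ 0 < t ∧ t < c.a n ∧
         x = (c.Qt n t, c.Pt n t))) ∧
      LL c.ξ j q = Lx c.ξ x q := by
  classical
  obtain ⟨N', hN'⟩ := exists_nat_ge (2 * Real.exp (2*q))
  set N : ℤ := (N' : ℤ) with hNdef
  have hN : 2 * Real.exp (2*q) ≤ (N:ℝ) := by
    rw [hNdef]; push_cast; exact hN'
  have hN0 : (0:ℤ) ≤ N := by rw [hNdef]; positivity
  set S₁ : Finset ℤ := (Finset.Icc 0 N).filter (fun n => (n : WithTop ℤ) < c.s) with hS₁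
  have h0S : (0:ℤ) ∈ S₁ := by
    rw [hS₁, Finset.mem_filter, Finset.mem_Icc]
    exact ⟨⟨le_refl _, hN0⟩, c.zero_lt_s⟩
  obtain ⟨M, hMS, hMmin⟩ := S₁.exists_min_image (fun n => mval c.ξ q (c.xx n)) ⟨0, h0S⟩
  rw [hS₁, Finset.mem_filter, Finset.mem_Icc] at hMS
  obtain ⟨⟨hM0, hMN⟩, hMs⟩ := hMS
  have hmin' : ∀ n : ℤ, 0 ≤ n → n ≤ N → (n : WithTop ℤ) < c.s →
      mval c.ξ q (c.xx M) ≤ mval c.ξ q (c.xx n) := by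
    intro n h1 h2 h3
    exact hMmin n (by rw [hS₁, Finset.mem_filter, Finset.mem_Icc]; exact ⟨⟨h1, h2⟩, h3⟩)
  have hMe : mval c.ξ q (c.xx M) ≤ Real.exp q :=
    le_trans (hmin' 0 (le_refl _) hN0 c.zero_lt_s) (c.mval_x0_le q hq)
  have hlow := c.lam1_lower q hq hN hM0 hMs hmin' hMe
  have hxM0 : c.xx M ≠ 0 := c.xx_ne_zero (by omega) hMs
  have hpos : 0 < mval c.ξ q (c.xx M) := mval_pos _ _ hxM0
  rcases hj with hj | hj <;> subst hj
  · -- j = 1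
    refine ⟨c.xx M, Or.inl ⟨M, by omega, hMs, rfl⟩, ?_⟩
    unfold LL
    rw [Lx_eq_log_mval]
    congr 1
    unfold lam
    apply IsLeast.csInf_eq
    constructor
    · refine ⟨le_of_lt hpos, ![c.xx M], ?_, ?_⟩
      · rw [linearIndependent_unique_iff]
        show (((c.xx M).1 : ℝ), ((c.xx M).2 : ℝ)) ≠ 0
        exact emb_ne_zero hxM0
      · intro i
        have hi : i = 0 := Subsingleton.elim _ _
        subst hi
        show (((c.xx M).1 : ℝ), ((c.xx M).2 : ℝ)) ∈ _
        exact (mem_smul_body_iff hpos _).mpr (le_refl _)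
    · rintro l ⟨hl0, v, hli, hmem⟩
      have hv0 : v 0 ≠ 0 := by
        intro h
        apply hli.ne_zero 0
        show (((v 0).1 : ℝ), ((v 0).2 : ℝ)) = 0
        rw [h]
        norm_num
      have hlpos : 0 < l := by
        rcases eq_or_lt_of_le hl0 with h | h
        · exfalso
          apply not_mem_zero_smul_body hv0
          rw [h]
          exact hmem 0
        · exact h
      exact le_trans (hlow (v 0) hv0) ((mem_smul_body_iff hlpos (v 0)).mp (hmem 0))
  · -- j = 2
    have hMm1s : ((M-1 : ℤ) : WithTop ℤ) < c.s := c.coe_lt_s_of_le (by omega) hMs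
    have hstep := c.lam2_step q hq hN hM0 hMs hlow hMe
    set F₂ : Finset (ℤ × ℤ) :=
      (({c.xx (-1), c.xx (M-1)} : Finset (ℤ × ℤ)) ∪
        ((Finset.Icc 0 N).filter (fun n : ℤ => ((n : ℤ) : WithTop ℤ) < c.s ∧ n ≠ M)).image c.xx) ∪
      ((Finset.Icc 1 (c.a (M+1))).filter
        (fun _ => ((M+1 : ℤ) : WithTop ℤ) < c.s)).image
        (fun t => (c.Qt (M+1) t, c.Pt (M+1) t)) with hF₂
    have hF2mem : ∀ f : ℤ × ℤ, (f = c.xx (-1) ∨ f = c.xx (M-1) ∨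
        (∃ n : ℤ, 0 ≤ n ∧ n ≤ N ∧ (n : WithTop ℤ) < c.s ∧ n ≠ M ∧ f = c.xx n) ∨
        (∃ t : ℤ, 1 ≤ t ∧ t ≤ c.a (M+1) ∧ ((M+1 : ℤ) : WithTop ℤ) < c.s ∧
          f = (c.Qt (M+1) t, c.Pt (M+1) t))) → f ∈ F₂ := by
      intro f hf
      rw [hF₂]
      rcases hf with h | h | ⟨n, h1, h2, h3, h4, h5⟩ | ⟨t, h1, h2, h3, h4⟩
      · apply Finset.mem_union_left
        apply Finset.mem_union_left
        rw [h]; exact Finset.mem_insert_self _ _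
      · apply Finset.mem_union_left
        apply Finset.mem_union_left
        rw [h]; exact Finset.mem_insert_of_mem (Finset.mem_singleton_self _)
      · apply Finset.mem_union_left
        apply Finset.mem_union_right
        rw [Finset.mem_image]
        exact ⟨n, by rw [Finset.mem_filter, Finset.mem_Icc]; exact ⟨⟨h1, h2⟩, h3, h4⟩, h5.symm⟩
      · apply Finset.mem_union_right
        rw [Finset.mem_image]
        exact ⟨t, by rw [Finset.mem_filter, Finset.mem_Icc]; exact ⟨⟨h1, h2⟩, h3⟩, h4.symm⟩
    have hF2prop : ∀ f ∈ F₂,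
        ((∃ n : ℤ, -1 ≤ n ∧ (n : WithTop ℤ) < c.s ∧ f = (c.Q n, c.P n)) ∨
         (∃ n t : ℤ, 1 ≤ n ∧ (n : WithTop ℤ) < c.s ∧ 0 < t ∧ t < c.a n ∧
           f = (c.Qt n t, c.Pt n t))) ∧ dt f (c.xx M) ≠ 0 := by
      intro f hf
      rw [hF₂, Finset.mem_union, Finset.mem_union] at hf
      rcases hf with (hf | hf) | hf
      · rw [Finset.mem_insert, Finset.mem_singleton] at hf
        rcases hf with hf | hf
        · subst hf
          refine ⟨Or.inl ⟨-1, le_refl _, c.neg_one_lt_s, rfl⟩, ?_⟩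
          exact c.dt_xx_ne (le_refl _) (by omega) hMs
        · subst hf
          refine ⟨Or.inl ⟨M-1, by omega, hMm1s, rfl⟩, ?_⟩
          exact c.dt_xx_ne (by omega) (by omega) hMs
      · rw [Finset.mem_image] at hf
        obtain ⟨n, hn, hfn⟩ := hf
        rw [Finset.mem_filter, Finset.mem_Icc] at hn
        obtain ⟨⟨hn1, hn2⟩, hn3, hn4⟩ := hn
        subst hfn
        refine ⟨Or.inl ⟨n, by omega, hn3, rfl⟩, ?_⟩
        rcases lt_or_gt_of_ne hn4 with h | h
        · exact c.dt_xx_ne (by omega) h hMs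
        · rw [CFData.dt_comm]
          exact neg_ne_zero.mpr (c.dt_xx_ne (by omega) h hn3)
      · rw [Finset.mem_image] at hf
        obtain ⟨t, ht, hft⟩ := hf
        rw [Finset.mem_filter, Finset.mem_Icc] at ht
        obtain ⟨⟨ht1, ht2⟩, hts⟩ := ht
        subst hft
        constructor
        · rcases eq_or_lt_of_le ht2 with he | hlt
          · -- t = a (M+1) : this is the convergent x (M+1)
            left
            refine ⟨M+1, by omega, hts, ?_⟩
            have hrecQ := c.hQrec (M+1) (by omega) hts
            have hrecP := c.hPrec (M+1) (by omega) hts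
            have eQ : c.Qt (M+1) t = c.Q (M+1) := by
              unfold CFData.Qt; rw [hrecQ, he]
            have eP : c.Pt (M+1) t = c.P (M+1) := by
              unfold CFData.Pt; rw [hrecP, he]
            rw [eQ, eP]
          · right
            exact ⟨M+1, t, by omega, hts, by omega, hlt, rfl⟩
        · have heq : dt (c.Qt (M+1) t, c.Pt (M+1) t) (c.xx M) = dt (c.xx (M-1)) (c.xx M) := by
            unfold dt CFData.xx CFData.Qt CFData.Pt
            simp only
            rw [show M+1-2 = M-1 by ring, show M+1-1 = M by ring]
            ring
          rw [heq]
          exact c.dt_xx_ne (by omega) (by omega) hMs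
    have hF2ne : F₂.Nonempty := ⟨c.xx (-1), hF2mem _ (Or.inl rfl)⟩
    obtain ⟨f₂, hf2F, hf2min⟩ := F₂.exists_min_image (mval c.ξ q) hF2ne
    obtain ⟨hf2fam, hf2dt⟩ := hF2prop f₂ hf2F
    have hf2ne0 : f₂ ≠ 0 := by
      intro h; rw [h] at hf2dt; exact hf2dt (CFData.dt_zero_left _)
    have hf2pos : 0 < mval c.ξ q f₂ := mval_pos _ _ hf2ne0
    have hl1f2 : mval c.ξ q (c.xx M) ≤ mval c.ξ q f₂ := hlow f₂ hf2ne0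
    refine ⟨f₂, hf2fam, ?_⟩
    unfold LL
    rw [Lx_eq_log_mval]
    congr 1
    unfold lam
    apply IsLeast.csInf_eq
    constructor
    · refine ⟨le_of_lt hf2pos, ![c.xx M, f₂], ?_, ?_⟩
      · apply li_of_dt_ne
        rw [CFData.dt_comm]
        exact neg_ne_zero.mpr hf2dt
      · intro i
        fin_cases i
        · show (((c.xx M).1 : ℝ), ((c.xx M).2 : ℝ)) ∈ _
          exact (mem_smul_body_iff hf2pos _).mpr hl1f2
        · show (((f₂).1 : ℝ), ((f₂).2 : ℝ)) ∈ _
          exact (mem_smul_body_iff hf2pos _).mpr (le_refl _)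
    · rintro l ⟨hl0, v, hli, hmem⟩
      have hd01 : dt (v 0) (v 1) ≠ 0 := dt_ne_of_li hli
      have hv00 : v 0 ≠ 0 := by
        intro h; rw [h] at hd01; exact hd01 (CFData.dt_zero_left _)
      have hlpos : 0 < l := by
        rcases eq_or_lt_of_le hl0 with h | h
        · exfalso
          apply not_mem_zero_smul_body hv00
          rw [h]
          exact hmem 0
        · exact h
      have hm0 : mval c.ξ q (v 0) ≤ l := (mem_smul_body_iff hlpos _).mp (hmem 0)
      have hm1 : mval c.ξ q (v 1) ≤ l := (mem_smul_body_iff hlpos _).mp (hmem 1)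
      have hone : dt (v 0) (c.xx M) ≠ 0 ∨ dt (v 1) (c.xx M) ≠ 0 := by
        by_contra hcon
        push_neg at hcon
        exact hd01 (dt_trans hxM0 hcon.1 hcon.2)
      rcases hone with h | h
      · obtain ⟨g, hgd, hgle⟩ := hstep (v 0) h
        exact le_trans (hf2min g (hF2mem g hgd)) (le_trans hgle hm0)
      · obtain ⟨g, hgd, hgle⟩ := hstep (v 1) h
        exact le_trans (hf2min g (hF2mem g hgd)) (le_trans hgle hm1)

theorem stmt9 (c : CFData) (q : ℝ) (hq : 0 ≤ q) (j : ℕ) (hj : j = 1 ∨ j = 2) :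
    ∃ x : ℤ × ℤ,
      ((∃ n : ℤ, -1 ≤ n ∧ (n : WithTop ℤ) < c.s ∧ x = (c.Q n, c.P n)) ∨
       (∃ n t : ℤ, 1 ≤ n ∧ (n : WithTop ℤ) < c.s ∧ 0 < t ∧ t < c.a n ∧
         x = (c.Qt n t, c.Pt n t))) ∧
      LL c.ξ j q = Lx c.ξ x q := by
  exact stmt9' c q hq j hj
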